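/- For the truncated Poisson distribution q^{0.95}(λ) (Poisson(λ) truncated at its 0.95-quantile and renormalized), the maximal support point m(q^{0.95}(λ)) satisfies λ - ln 2 ≤ m(q^{0.95}(λ)) ≤ 1.3λ + 5 for all λ > 0. -/

import Mathlib

set_option maxHeartbeats 1000000

open Finset

noncomputable def poissonPMF (r : ℝ) (k : ℕ) : ℝ :=
  Real.exp (-r) * r ^ k / (Nat.factorial k)

noncomputable def poissonCDF (r : ℝ) (m : ℕ) : ℝ :=
  ∑ k ∈ Finset.range (m + 1), poissonPMF r k

lemma exp_tsum (x : ℝ) : Real.exp x = ∑' n : ℕ, x ^ n / (Nat.factorial n) := by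
  rw [Real.exp_eq_exp_ℝ, NormedSpace.exp_eq_tsum_div]

lemma cdf_eq (r : ℝ) (m : ℕ) :
    poissonCDF r m = Real.exp (-r) * ∑ k ∈ range (m+1), r ^ k / (Nat.factorial k) := by
  rw [Finset.mul_sum]
  refine Finset.sum_congr rfl fun k _ => ?_
  rw [poissonPMF, mul_div_assoc]

lemma partial_le_exp (x : ℝ) (hx : 0 ≤ x) (N : ℕ) :
    ∑ k ∈ range N, x ^ k / (Nat.factorial k) ≤ Real.exp x := by
  rw [exp_tsum]
  exact Summable.sum_le_tsum _ (fun k _ => by positivity) (Real.summable_pow_div_factorial x)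

lemma single_le_exp (x : ℝ) (hx : 0 ≤ x) (n : ℕ) :
    x ^ n / (Nat.factorial n) ≤ Real.exp x := by
  rw [exp_tsum]
  exact (Real.summable_pow_div_factorial x).le_tsum n (fun k _ => by positivity)

lemma tail_bound (lam b : ℝ) (m : ℕ) (h0 : 0 < lam) (hlb : lam ≤ b) (hb : b < (m:ℝ)+2) :
    ∑' j : ℕ, lam ^ (j + (m+1)) / (Nat.factorial (j + (m+1)))
      ≤ lam ^ (m+1) / (Nat.factorial (m+1)) * (((m:ℝ)+2)/(((m:ℝ)+2)-b)) := by
  have hb0 : 0 ≤ b := le_trans h0.le hlb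
  have hr0 : 0 ≤ b / ((m:ℝ)+2) := by positivity
  have hr1 : b / ((m:ℝ)+2) < 1 := by
    rw [div_lt_one (by positivity)]; exact hb
  have hsum1 : Summable (fun j : ℕ => lam ^ (j + (m+1)) / (Nat.factorial (j + (m+1)) : ℝ)) := by
    exact (summable_nat_add_iff (m+1)).2 (Real.summable_pow_div_factorial lam)
  have hsum2 : Summable (fun j : ℕ => lam ^ (m+1) / (Nat.factorial (m+1) : ℝ) * (b / ((m:ℝ)+2)) ^ j) :=
    (summable_geometric_of_lt_one hr0 hr1).mul_left _
  have hterm : ∀ j : ℕ, lam ^ (j + (m+1)) / (Nat.factorial (j + (m+1)) : ℝ)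
      ≤ lam ^ (m+1) / (Nat.factorial (m+1) : ℝ) * (b / ((m:ℝ)+2)) ^ j := by
    intro j
    have hfac : ((Nat.factorial (m+1) : ℝ)) * ((m:ℝ)+2) ^ j ≤ (Nat.factorial (j + (m+1)) : ℝ) := by
      have := Nat.factorial_mul_pow_le_factorial (m := m+1) (n := j)
      calc ((Nat.factorial (m+1) : ℝ)) * ((m:ℝ)+2) ^ j
          = ((Nat.factorial (m+1) * (m+1+1) ^ j : ℕ) : ℝ) := by push_cast; ring
        _ ≤ ((Nat.factorial (m+1+j) : ℕ) : ℝ) := by exact_mod_cast Nat.cast_le.2 this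
        _ = (Nat.factorial (j + (m+1)) : ℝ) := by rw [Nat.add_comm]
    have hnum : lam ^ (j + (m+1)) ≤ lam ^ (m+1) * b ^ j := by
      rw [pow_add]
      have : lam ^ j ≤ b ^ j := pow_le_pow_left₀ h0.le hlb j
      calc lam ^ j * lam ^ (m+1) = lam ^ (m+1) * lam ^ j := by ring
        _ ≤ lam ^ (m+1) * b ^ j := by
            exact mul_le_mul_of_nonneg_left this (by positivity)
    rw [div_pow, div_mul_div_comm, div_le_div_iff₀ (by positivity) (by positivity)]
    calc lam ^ (j + (m+1)) * ((Nat.factorial (m+1) : ℝ) * ((m:ℝ)+2) ^ j)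
        ≤ (lam ^ (m+1) * b ^ j) * (Nat.factorial (j + (m+1)) : ℝ) :=
          mul_le_mul hnum hfac (by positivity) (by positivity)
      _ = lam ^ (m+1) * b ^ j * (Nat.factorial (j + (m+1)) : ℝ) := by ring
  calc ∑' j : ℕ, lam ^ (j + (m+1)) / (Nat.factorial (j + (m+1)) : ℝ)
      ≤ ∑' j : ℕ, lam ^ (m+1) / (Nat.factorial (m+1) : ℝ) * (b / ((m:ℝ)+2)) ^ j :=
        Summable.tsum_le_tsum hterm hsum1 hsum2
    _ = lam ^ (m+1) / (Nat.factorial (m+1) : ℝ) * (1 - b/((m:ℝ)+2))⁻¹ := by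
        rw [tsum_mul_left, tsum_geometric_of_lt_one hr0 hr1]
    _ = lam ^ (m+1) / (Nat.factorial (m+1) : ℝ) * (((m:ℝ)+2)/(((m:ℝ)+2)-b)) := by
        congr 1
        rw [inv_eq_one_div]
        rw [div_eq_div_iff (by nlinarith) (by nlinarith)]
        field_simp

lemma fact_step (lam b : ℝ) (h0 : 0 < lam) (hlb : lam ≤ b) (k : ℕ) :
    lam ^ (k+1) / (Nat.factorial (k+1) : ℝ) * (((k:ℝ)+1)/b)
      ≤ lam ^ k / (Nat.factorial k : ℝ) := by
  have hb : 0 < b := lt_of_lt_of_le h0 hlb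
  have hf : ((Nat.factorial (k+1) : ℝ)) = ((k:ℝ)+1) * (Nat.factorial k : ℝ) := by
    rw [Nat.factorial_succ]; push_cast; ring
  rw [hf, pow_succ, div_mul_div_comm, div_le_div_iff₀ (by positivity) (by positivity)]
  have hfk : (0:ℝ) < (Nat.factorial k : ℝ) := by exact_mod_cast Nat.factorial_pos k
  have key := mul_le_mul_of_nonneg_right hlb
    (show (0:ℝ) ≤ lam ^ k * (((k:ℝ)+1) * (Nat.factorial k : ℝ)) by positivity)
  nlinarith [key]

lemma head_term_bound (lam b : ℝ) (m : ℕ) (h0 : 0 < lam) (hlb : lam ≤ b) :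
    ∀ j, j ≤ m → lam ^ (m+1) / (Nat.factorial (m+1) : ℝ)
        * ∏ i ∈ range (j+1), ((m+1-i : ℕ) : ℝ) / b
      ≤ lam ^ (m - j) / (Nat.factorial (m - j) : ℝ) := by
  have hb : 0 < b := lt_of_lt_of_le h0 hlb
  intro j
  induction j with
  | zero =>
    intro _
    rw [Finset.prod_range_one]
    have : ((m+1-0 : ℕ) : ℝ) = ((m:ℕ):ℝ) + 1 := by push_cast; ring
    rw [this]
    simpa using fact_step lam b h0 hlb m
  | succ j ih =>
    intro hjm
    have hj : j ≤ m := by omega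
    have ihj := ih hj
    set d := m - (j+1) with hd
    have hmj : m - j = d + 1 := by omega
    rw [hmj] at ihj
    have hcast : ((m+1-(j+1) : ℕ) : ℝ) = ((d:ℝ)+1) := by
      have h' : m+1-(j+1) = d+1 := by omega
      rw [h']; push_cast; ring
    have hnn : (0:ℝ) ≤ ((d:ℝ)+1)/b := by positivity
    have hmul := mul_le_mul_of_nonneg_right ihj hnn
    have hfin := le_trans hmul (fact_step lam b h0 hlb d)
    rw [Finset.prod_range_succ, ← mul_assoc, hcast]
    exact hfin

lemma interval_lemma (b : ℝ) (m J : ℕ) (hJ : J ≤ m) (hb2 : b < (m:ℝ)+2)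
    (hcert : 19 * (((m:ℝ)+2)/(((m:ℝ)+2)-b))
      ≤ ∑ j ∈ range (J+1), ∏ i ∈ range (j+1), ((m+1-i : ℕ) : ℝ) / b)
    (lam : ℝ) (h0 : 0 < lam) (hlb : lam ≤ b) :
    (0.95:ℝ) ≤ poissonCDF lam m := by
  set H := ∑ k ∈ range (m+1), lam ^ k / (Nat.factorial k : ℝ) with hH
  set t := lam ^ (m+1) / (Nat.factorial (m+1) : ℝ) with ht
  have ht0 : 0 < t := by rw [ht]; positivity
  set T := ∑' j : ℕ, lam ^ (j + (m+1)) / (Nat.factorial (j + (m+1)) : ℝ) with hT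
  -- head chain
  have h1 : t * ∑ j ∈ range (J+1), ∏ i ∈ range (j+1), ((m+1-i : ℕ) : ℝ) / b
      ≤ ∑ j ∈ range (J+1), lam ^ (m - j) / (Nat.factorial (m - j) : ℝ) := by
    rw [Finset.mul_sum]
    apply Finset.sum_le_sum
    intro j hj
    exact head_term_bound lam b m h0 hlb j (by
      have := Finset.mem_range.1 hj; omega)
  have h2 : ∑ j ∈ range (J+1), lam ^ (m - j) / (Nat.factorial (m - j) : ℝ)
      ≤ ∑ j ∈ range (m+1), lam ^ (m - j) / (Nat.factorial (m - j) : ℝ) := by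
    apply Finset.sum_le_sum_of_subset_of_nonneg
    · exact Finset.range_subset_range.2 (by omega)
    · intro i _ _; positivity
  have h3 : ∑ j ∈ range (m+1), lam ^ (m - j) / (Nat.factorial (m - j) : ℝ) = H := by
    rw [hH]
    have := Finset.sum_range_reflect (fun k => lam ^ k / (Nat.factorial k : ℝ)) (m+1)
    simpa using this
  have hHge : t * (19 * (((m:ℝ)+2)/(((m:ℝ)+2)-b))) ≤ H := by
    calc t * (19 * (((m:ℝ)+2)/(((m:ℝ)+2)-b)))
        ≤ t * ∑ j ∈ range (J+1), ∏ i ∈ range (j+1), ((m+1-i : ℕ) : ℝ) / b :=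
          mul_le_mul_of_nonneg_left hcert ht0.le
      _ ≤ ∑ j ∈ range (J+1), lam ^ (m - j) / (Nat.factorial (m - j) : ℝ) := h1
      _ ≤ H := le_of_le_of_eq h2 h3
  have hTle : T ≤ t * (((m:ℝ)+2)/(((m:ℝ)+2)-b)) := tail_bound lam b m h0 hlb hb2
  have hsplit : Real.exp lam = H + T := by
    rw [exp_tsum]
    exact (Summable.sum_add_tsum_nat_add (m+1) (Real.summable_pow_div_factorial lam)).symm
  have hG0 : 0 < ((m:ℝ)+2)/(((m:ℝ)+2)-b) := by
    have hb0 : 0 < b := h0.trans_le hlb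
    apply div_pos (by positivity) (by linarith)
  rw [cdf_eq, Real.exp_neg, inv_mul_eq_div, le_div_iff₀ (Real.exp_pos lam)]
  rw [hsplit]
  nlinarith [hHge, hTle, ht0, hG0]

lemma factorial_pair (m : ℕ) : ∀ j, j ≤ m →
    ((Nat.factorial (m+1+j) : ℝ)) ≤ (Nat.factorial (m-j) : ℝ) * (((m:ℝ)+1))^(2*j+1) := by
  intro j
  induction j with
  | zero =>
    intro _
    have h1 : m+1+0 = m+1 := rfl
    have h2 : m-0 = m := rfl
    rw [h1, h2, Nat.factorial_succ, pow_one]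
    push_cast; nlinarith [Nat.factorial_pos m]
  | succ j ih =>
    intro hjm
    have hj : j ≤ m := by omega
    have ihj := ih hj
    set d := m - (j+1) with hd
    have hmd : m = d + j + 1 := by omega
    have hfs : ((Nat.factorial (m+1+(j+1)) : ℝ)) = ((m:ℝ)+2+(j:ℝ)) * (Nat.factorial (m+1+j) : ℝ) := by
      have he : m+1+(j+1) = (m+1+j)+1 := by omega
      rw [he, Nat.factorial_succ]; push_cast; ring
    have hfd : ((Nat.factorial (m-j) : ℝ)) = ((d:ℝ)+1) * (Nat.factorial d : ℝ) := by
      have he : m - j = d + 1 := by omega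
      rw [he, Nat.factorial_succ]; push_cast; ring
    have hkey : ((m:ℝ)+2+(j:ℝ)) * (((d:ℝ)+1)) ≤ (((m:ℝ)+1))^2 := by
      have : (m:ℝ) = (d:ℝ) + (j:ℝ) + 1 := by exact_mod_cast congrArg (Nat.cast : ℕ → ℝ) hmd
      nlinarith [sq_nonneg ((j:ℝ)+1)]
    have hexp : 2*(j+1)+1 = (2*j+1)+2 := by omega
    rw [hexp, pow_add]
    calc ((Nat.factorial (m+1+(j+1)) : ℝ))
        = ((m:ℝ)+2+(j:ℝ)) * (Nat.factorial (m+1+j) : ℝ) := hfs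
      _ ≤ ((m:ℝ)+2+(j:ℝ)) * ((Nat.factorial (m-j) : ℝ) * (((m:ℝ)+1))^(2*j+1)) := by
          apply mul_le_mul_of_nonneg_left ihj
          have h1 : (0:ℝ) ≤ (m:ℝ) := Nat.cast_nonneg m
          have h2 : (0:ℝ) ≤ (j:ℝ) := Nat.cast_nonneg j
          linarith
      _ = (((m:ℝ)+2+(j:ℝ)) * ((d:ℝ)+1)) * ((Nat.factorial d : ℝ) * (((m:ℝ)+1))^(2*j+1)) := by
          rw [hfd]; ring
      _ ≤ (((m:ℝ)+1))^2 * ((Nat.factorial d : ℝ) * (((m:ℝ)+1))^(2*j+1)) := by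
          apply mul_le_mul_of_nonneg_right hkey
          positivity
      _ = (Nat.factorial (m-(j+1)) : ℝ) * ((((m:ℝ)+1))^(2*j+1) * (((m:ℝ)+1))^2) := by
          rw [← hd]; ring

lemma lower_aux (lam : ℝ) (m : ℕ) (h0 : 0 < lam) (hgt : (m:ℝ) + Real.log 2 < lam) :
    poissonCDF lam m < 0.95 := by
  have hlog2 : (0.6931471803 : ℝ) < Real.log 2 := Real.log_two_gt_d9
  have hlog2' : Real.log 2 < 0.6931471808 := Real.log_two_lt_d9
  have hm0 : (0:ℝ) ≤ (m:ℝ) := Nat.cast_nonneg m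
  have hml : (0:ℝ) < (m:ℝ) + Real.log 2 := by linarith
  have hkey : ∀ j, j ≤ m → (((m:ℝ)+1))^(2*j+1) < 19 * lam^(2*j+1) := by
    intro j hj
    rcases le_or_gt ((m:ℝ)+1) lam with hc | hc
    · have h1 : ((m:ℝ)+1)^(2*j+1) ≤ lam^(2*j+1) := pow_le_pow_left₀ (by positivity) hc _
      have h2 : (0:ℝ) < lam^(2*j+1) := by positivity
      linarith
    · have hrB : ((m:ℝ)+1)/lam < ((m:ℝ)+1)/((m:ℝ)+Real.log 2) :=
        div_lt_div_of_pos_left (by positivity) hml hgt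
      have h1lam : 1 ≤ ((m:ℝ)+1)/lam := by rw [le_div_iff₀ h0]; linarith
      have hr2 : (((m:ℝ)+1)/lam)^(2*j+1) ≤ (((m:ℝ)+1)/lam)^(2*m+1) :=
        pow_le_pow_right₀ h1lam (by omega)
      have hB1 : (((m:ℝ)+1)/((m:ℝ)+Real.log 2))^(2*m+1)
          ≤ Real.exp (2*(1 - Real.log 2)) := by
        have hxpos : (0:ℝ) ≤ (1 - Real.log 2)/((m:ℝ)+Real.log 2) := by
          apply div_nonneg (by linarith) hml.le
        have hx : ((m:ℝ)+1)/((m:ℝ)+Real.log 2) ≤ Real.exp ((1 - Real.log 2)/((m:ℝ)+Real.log 2)) := by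
          have heq : ((m:ℝ)+1)/((m:ℝ)+Real.log 2) = 1 + (1 - Real.log 2)/((m:ℝ)+Real.log 2) := by
            field_simp
            ring
          rw [heq]
          linarith [Real.add_one_le_exp ((1 - Real.log 2)/((m:ℝ)+Real.log 2))]
        calc (((m:ℝ)+1)/((m:ℝ)+Real.log 2))^(2*m+1)
            ≤ (Real.exp ((1 - Real.log 2)/((m:ℝ)+Real.log 2)))^(2*m+1) :=
              pow_le_pow_left₀ (by positivity) hx _
          _ = Real.exp (((2*m+1 : ℕ):ℝ) * ((1 - Real.log 2)/((m:ℝ)+Real.log 2))) := by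
              rw [Real.exp_nat_mul]
          _ ≤ Real.exp (2*(1 - Real.log 2)) := by
              apply Real.exp_le_exp.2
              rw [mul_div_assoc', div_le_iff₀ hml]
              push_cast
              nlinarith [hlog2, hlog2', hm0]
      have hexp4 : Real.exp (2*(1-Real.log 2)) < 19 := by
        have h2 : Real.exp (2*(1-Real.log 2)) = Real.exp 1 * Real.exp 1 / 4 := by
          rw [show 2*(1-Real.log 2) = 1 + 1 - (Real.log 2 + Real.log 2) by ring]
          rw [Real.exp_sub, Real.exp_add, Real.exp_add, Real.exp_log two_pos]
          norm_num
        rw [h2]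
        nlinarith [Real.exp_one_lt_d9, Real.exp_pos 1]
      have hfinal : (((m:ℝ)+1)/lam)^(2*j+1) < 19 := by
        calc (((m:ℝ)+1)/lam)^(2*j+1) ≤ (((m:ℝ)+1)/lam)^(2*m+1) := hr2
          _ < (((m:ℝ)+1)/((m:ℝ)+Real.log 2))^(2*m+1) := by
              apply pow_lt_pow_left₀ hrB (by positivity) (by omega)
          _ ≤ Real.exp (2*(1 - Real.log 2)) := hB1
          _ < 19 := hexp4
      rw [div_pow, div_lt_iff₀ (by positivity)] at hfinal
      linarith
  have hterm : ∀ j ∈ range (m+1), lam^(m-j)/(Nat.factorial (m-j) : ℝ)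
      < 19 * (lam^(m+1+j)/(Nat.factorial (m+1+j) : ℝ)) := by
    intro j hj
    have hjm : j ≤ m := by have := Finset.mem_range.1 hj; omega
    have hfp := factorial_pair m j hjm
    have hk := hkey j hjm
    rw [mul_div_assoc', div_lt_div_iff₀ (by positivity) (by positivity)]
    have hpow : lam^(m-j) * lam^(2*j+1) = lam^(m+1+j) := by
      rw [← pow_add]
      congr 1
      omega
    calc lam^(m-j) * (Nat.factorial (m+1+j) : ℝ)
        ≤ lam^(m-j) * ((Nat.factorial (m-j) : ℝ) * (((m:ℝ)+1))^(2*j+1)) :=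
          mul_le_mul_of_nonneg_left hfp (by positivity)
      _ < lam^(m-j) * ((Nat.factorial (m-j) : ℝ) * (19 * lam^(2*j+1))) := by
          apply mul_lt_mul_of_pos_left _ (by positivity)
          apply mul_lt_mul_of_pos_left hk (by exact_mod_cast Nat.factorial_pos (m-j))
      _ = 19 * (lam^(m-j) * lam^(2*j+1)) * (Nat.factorial (m-j) : ℝ) := by ring
      _ = 19 * lam^(m+1+j) * (Nat.factorial (m-j) : ℝ) := by rw [hpow]
  have hAB : ∑ j ∈ range (m+1), lam^(m-j)/(Nat.factorial (m-j) : ℝ)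
      < ∑ j ∈ range (m+1), 19 * (lam^(m+1+j)/(Nat.factorial (m+1+j) : ℝ)) :=
    Finset.sum_lt_sum_of_nonempty Finset.nonempty_range_add_one hterm
  have hrefl : ∑ j ∈ range (m+1), lam^(m-j)/(Nat.factorial (m-j) : ℝ)
      = ∑ k ∈ range (m+1), lam^k/(Nat.factorial k : ℝ) := by
    have := Finset.sum_range_reflect (fun k => lam ^ k / (Nat.factorial k : ℝ)) (m+1)
    simpa using this
  have hmulsum : ∑ j ∈ range (m+1), 19 * (lam^(m+1+j)/(Nat.factorial (m+1+j) : ℝ))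
      = 19 * ∑ j ∈ range (m+1), lam^(m+1+j)/(Nat.factorial (m+1+j) : ℝ) := by
    rw [Finset.mul_sum]
  have hHB : (∑ k ∈ range (m+1), lam^k/(Nat.factorial k : ℝ))
      + ∑ j ∈ range (m+1), lam^(m+1+j)/(Nat.factorial (m+1+j) : ℝ) ≤ Real.exp lam := by
    have hsum := Finset.sum_range_add (fun k => lam^k/(Nat.factorial k : ℝ)) (m+1) (m+1)
    rw [← hsum]
    exact partial_le_exp lam h0.le _
  have hpos : (0:ℝ) < ∑ j ∈ range (m+1), lam^(m+1+j)/(Nat.factorial (m+1+j) : ℝ) := by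
    apply Finset.sum_pos (fun i _ => by positivity) Finset.nonempty_range_add_one
  rw [cdf_eq, Real.exp_neg, inv_mul_eq_div, div_lt_iff₀ (Real.exp_pos lam)]
  rw [hrefl] at hAB
  rw [hmulsum] at hAB
  nlinarith [hAB, hHB, hpos]

lemma upper_large (lam : ℝ) (h225 : 225 ≤ lam) :
    ∃ m : ℕ, (m:ℝ) ≤ 1.3*lam + 5 ∧ (0.95:ℝ) ≤ poissonCDF lam m := by
  have h0 : (0:ℝ) < lam := by linarith
  set m := Nat.floor (1.3*lam + 5) with hm
  have harg : (0:ℝ) ≤ 1.3*lam+5 := by linarith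
  have hfl : (m:ℝ) ≤ 1.3*lam+5 := Nat.floor_le harg
  have hfl2 : 1.3*lam+5 < (m:ℝ)+1 := Nat.lt_floor_add_one _
  refine ⟨m, hfl, ?_⟩
  set N : ℝ := (m:ℝ)+1 with hN
  have hNcast : N = ((m+1 : ℕ):ℝ) := by push_cast; ring
  have hDgt : 0.3*lam + 5 < N - lam := by rw [hN]; linarith
  have hNlt : N ≤ 1.3*lam + 6 := by rw [hN]; linarith
  have hlamN : lam < N := by linarith
  have hN0 : (0:ℝ) < N := by linarith
  have hmlt : lam < (m:ℝ)+2 := by linarith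
  have hT := tail_bound lam lam m h0 le_rfl hmlt
  have hG0 : (0:ℝ) ≤ ((m:ℝ)+2)/(((m:ℝ)+2)-lam) := by
    apply div_nonneg (by linarith) (by linarith)
  have hG : ((m:ℝ)+2)/(((m:ℝ)+2)-lam) ≤ 13/3 := by
    rw [div_le_div_iff₀ (by linarith) (by norm_num)]
    linarith
  have hsingle : N^(m+1) ≤ Real.exp N * (Nat.factorial (m+1) : ℝ) := by
    have h1 := single_le_exp N hN0.le (m+1)
    rw [div_le_iff₀ (by exact_mod_cast Nat.factorial_pos (m+1))] at h1
    exact h1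
  -- sqrt inequality
  set u := Real.sqrt N with hu'
  set v := Real.sqrt lam with hv'
  have hu : u^2 = N := Real.sq_sqrt hN0.le
  have hv : v^2 = lam := Real.sq_sqrt h0.le
  have hu0 : 0 < u := Real.sqrt_pos.2 hN0
  have hv0 : 0 < v := Real.sqrt_pos.2 h0
  have hlog : 2*(1 - v/u) ≤ Real.log (N/lam) := by
    have hpos : (0:ℝ) < N/lam := by positivity
    have h1 : Real.log (N/lam) = 2 * Real.log (Real.sqrt (N/lam)) := by
      rw [Real.log_sqrt hpos.le]; ring
    have h2 : Real.sqrt (N/lam) = u/v := Real.sqrt_div hN0.le lam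
    have h3 : 1 - (u/v)⁻¹ ≤ Real.log (u/v) :=
      Real.one_sub_inv_le_log_of_pos (by positivity)
    rw [h1, h2, inv_div] at *
    linarith [h3]
  have hkey5 : (5:ℝ) ≤ N*Real.log (N/lam) - (N - lam) := by
    have hq : N*(2*(1-v/u)) - (N - lam) = (u - v)^2 := by
      rw [← hu, ← hv]; field_simp; ring
    have hDuv : N - lam = (u-v)*(u+v) := by rw [← hu, ← hv]; ring
    have hge : (N-lam)^2/(2*(N+lam)) ≤ (u-v)^2 := by
      rw [div_le_iff₀ (by positivity)]
      calc (N-lam)^2 = (u-v)^2*(u+v)^2 := by rw [hDuv]; ring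
        _ ≤ (u-v)^2*(2*(u^2+v^2)) := by
            apply mul_le_mul_of_nonneg_left _ (sq_nonneg _)
            nlinarith [sq_nonneg (u-v)]
        _ = (u-v)^2 * (2*(N+lam)) := by rw [hu, hv]
    have hnum : (5:ℝ) ≤ (N-lam)^2/(2*(N+lam)) := by
      rw [le_div_iff₀ (by positivity)]
      nlinarith [hDgt, hNlt, h225]
    have hNlog : N*(2*(1 - v/u)) ≤ N*Real.log (N/lam) :=
      mul_le_mul_of_nonneg_left hlog hN0.le
    linarith
  have hlog260 : Real.log (260/3) ≤ 5 := by
    rw [Real.log_le_iff_le_exp (by norm_num)]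
    have h5 : Real.exp (5:ℝ) = (Real.exp 1)^(5:ℕ) := by
      rw [← Real.exp_nat_mul]; norm_num
    rw [h5]
    calc (260/3 : ℝ) ≤ 2.7182818283^(5:ℕ) := by norm_num
      _ ≤ (Real.exp 1)^(5:ℕ) := pow_le_pow_left₀ (by norm_num) Real.exp_one_gt_d9.le 5
  have ht : lam^(m+1)/(Nat.factorial (m+1) : ℝ) ≤ 3/260 * Real.exp lam := by
    have hlogdiv : Real.log (N/lam) = Real.log N - Real.log lam :=
      Real.log_div (by linarith) (ne_of_gt h0)
    have hkey5' : (5:ℝ) ≤ N*Real.log N - N*Real.log lam - (N - lam) := by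
      rw [hlogdiv] at hkey5; nlinarith [hkey5]
    have hexp_ineq : Real.log (260/3) + N * Real.log lam + N ≤ lam + N * Real.log N := by
      nlinarith [hkey5', hlog260]
    have hlam_pow : lam^(m+1) = Real.exp (N * Real.log lam) := by
      rw [hNcast, Real.exp_nat_mul, Real.exp_log h0]
    have hN_pow : N^(m+1) = Real.exp (N * Real.log N) := by
      rw [hNcast, Real.exp_nat_mul, Real.exp_log (show (0:ℝ) < ((m+1:ℕ):ℝ) by exact_mod_cast Nat.succ_pos m)]
    have hmain : (260/3) * lam^(m+1) * Real.exp N ≤ Real.exp lam * N^(m+1) := by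
      calc (260/3) * lam^(m+1) * Real.exp N
          = Real.exp (Real.log (260/3) + N * Real.log lam + N) := by
            rw [Real.exp_add (Real.log (260/3) + N * Real.log lam) N,
              Real.exp_add (Real.log (260/3)) (N * Real.log lam),
              Real.exp_log (by norm_num : (0:ℝ) < 260/3), hlam_pow]
        _ ≤ Real.exp (lam + N * Real.log N) := Real.exp_le_exp.2 hexp_ineq
        _ = Real.exp lam * N^(m+1) := by rw [Real.exp_add lam (N * Real.log N), hN_pow]
    have hchain : (260/3) * lam^(m+1) * Real.exp N
        ≤ (Real.exp lam * (Nat.factorial (m+1) : ℝ)) * Real.exp N := by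
      calc (260/3) * lam^(m+1) * Real.exp N ≤ Real.exp lam * N^(m+1) := hmain
        _ ≤ Real.exp lam * (Real.exp N * (Nat.factorial (m+1) : ℝ)) :=
            mul_le_mul_of_nonneg_left hsingle (Real.exp_pos lam).le
        _ = (Real.exp lam * (Nat.factorial (m+1) : ℝ)) * Real.exp N := by ring
    have hcancel := le_of_mul_le_mul_right hchain (Real.exp_pos N)
    rw [div_le_iff₀ (by exact_mod_cast Nat.factorial_pos (m+1))]
    linarith
  have hsplit : Real.exp lam = (∑ k ∈ range (m+1), lam^k/(Nat.factorial k : ℝ))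
      + ∑' j : ℕ, lam ^ (j + (m+1)) / (Nat.factorial (j + (m+1)) : ℝ) := by
    rw [exp_tsum]
    exact (Summable.sum_add_tsum_nat_add (m+1) (Real.summable_pow_div_factorial lam)).symm
  have hTfinal : ∑' j : ℕ, lam ^ (j + (m+1)) / (Nat.factorial (j + (m+1)) : ℝ)
      ≤ (1/20) * Real.exp lam := by
    calc ∑' j : ℕ, lam ^ (j + (m+1)) / (Nat.factorial (j + (m+1)) : ℝ)
        ≤ lam ^ (m+1) / (Nat.factorial (m+1) : ℝ) * (((m:ℝ)+2)/(((m:ℝ)+2)-lam)) := hT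
      _ ≤ (3/260 * Real.exp lam) * (13/3) := by
          apply mul_le_mul ht hG hG0 (by positivity)
      _ = (1/20) * Real.exp lam := by ring
  rw [cdf_eq, Real.exp_neg, inv_mul_eq_div, le_div_iff₀ (Real.exp_pos lam)]
  linarith [hsplit, hTfinal]

set_option maxHeartbeats 4000000 in
lemma cert1 : 19 * ((((5:ℕ):ℝ)+2)/((((5:ℕ):ℝ)+2)-(5/2 : ℝ))) ≤
    ∑ j ∈ Finset.range (4+1), ∏ i ∈ Finset.range (j+1), ((5+1-i : ℕ) : ℝ) / (5/2 : ℝ) := by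
  norm_num [Finset.sum_range_succ, Finset.prod_range_succ]

set_option maxHeartbeats 4000000 in
lemma cert2 : 19 * ((((8:ℕ):ℝ)+2)/((((8:ℕ):ℝ)+2)-(9/2 : ℝ))) ≤
    ∑ j ∈ Finset.range (6+1), ∏ i ∈ Finset.range (j+1), ((8+1-i : ℕ) : ℝ) / (9/2 : ℝ) := by
  norm_num [Finset.sum_range_succ, Finset.prod_range_succ]

set_option maxHeartbeats 4000000 in
lemma cert3 : 19 * ((((10:ℕ):ℝ)+2)/((((10:ℕ):ℝ)+2)-(6 : ℝ))) ≤
    ∑ j ∈ Finset.range (7+1), ∏ i ∈ Finset.range (j+1), ((10+1-i : ℕ) : ℝ) / (6 : ℝ) := by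
  norm_num [Finset.sum_range_succ, Finset.prod_range_succ]

set_option maxHeartbeats 4000000 in
lemma cert4 : 19 * ((((12:ℕ):ℝ)+2)/((((12:ℕ):ℝ)+2)-(15/2 : ℝ))) ≤
    ∑ j ∈ Finset.range (8+1), ∏ i ∈ Finset.range (j+1), ((12+1-i : ℕ) : ℝ) / (15/2 : ℝ) := by
  norm_num [Finset.sum_range_succ, Finset.prod_range_succ]

set_option maxHeartbeats 4000000 in
lemma cert5 : 19 * ((((14:ℕ):ℝ)+2)/((((14:ℕ):ℝ)+2)-(9 : ℝ))) ≤
    ∑ j ∈ Finset.range (9+1), ∏ i ∈ Finset.range (j+1), ((14+1-i : ℕ) : ℝ) / (9 : ℝ) := by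
  norm_num [Finset.sum_range_succ, Finset.prod_range_succ]

set_option maxHeartbeats 4000000 in
lemma cert6 : 19 * ((((16:ℕ):ℝ)+2)/((((16:ℕ):ℝ)+2)-(21/2 : ℝ))) ≤
    ∑ j ∈ Finset.range (9+1), ∏ i ∈ Finset.range (j+1), ((16+1-i : ℕ) : ℝ) / (21/2 : ℝ) := by
  norm_num [Finset.sum_range_succ, Finset.prod_range_succ]

set_option maxHeartbeats 4000000 in
lemma cert7 : 19 * ((((18:ℕ):ℝ)+2)/((((18:ℕ):ℝ)+2)-(12 : ℝ))) ≤
    ∑ j ∈ Finset.range (9+1), ∏ i ∈ Finset.range (j+1), ((18+1-i : ℕ) : ℝ) / (12 : ℝ) := by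
  norm_num [Finset.sum_range_succ, Finset.prod_range_succ]

set_option maxHeartbeats 4000000 in
lemma cert8 : 19 * ((((20:ℕ):ℝ)+2)/((((20:ℕ):ℝ)+2)-(55/4 : ℝ))) ≤
    ∑ j ∈ Finset.range (11+1), ∏ i ∈ Finset.range (j+1), ((20+1-i : ℕ) : ℝ) / (55/4 : ℝ) := by
  norm_num [Finset.sum_range_succ, Finset.prod_range_succ]

set_option maxHeartbeats 4000000 in
lemma cert9 : 19 * ((((22:ℕ):ℝ)+2)/((((22:ℕ):ℝ)+2)-(61/4 : ℝ))) ≤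
    ∑ j ∈ Finset.range (11+1), ∏ i ∈ Finset.range (j+1), ((22+1-i : ℕ) : ℝ) / (61/4 : ℝ) := by
  norm_num [Finset.sum_range_succ, Finset.prod_range_succ]

set_option maxHeartbeats 4000000 in
lemma cert10 : 19 * ((((24:ℕ):ℝ)+2)/((((24:ℕ):ℝ)+2)-(17 : ℝ))) ≤
    ∑ j ∈ Finset.range (12+1), ∏ i ∈ Finset.range (j+1), ((24+1-i : ℕ) : ℝ) / (17 : ℝ) := by
  norm_num [Finset.sum_range_succ, Finset.prod_range_succ]

set_option maxHeartbeats 4000000 in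
lemma cert11 : 19 * ((((27:ℕ):ℝ)+2)/((((27:ℕ):ℝ)+2)-(39/2 : ℝ))) ≤
    ∑ j ∈ Finset.range (14+1), ∏ i ∈ Finset.range (j+1), ((27+1-i : ℕ) : ℝ) / (39/2 : ℝ) := by
  norm_num [Finset.sum_range_succ, Finset.prod_range_succ]

set_option maxHeartbeats 4000000 in
lemma cert12 : 19 * ((((30:ℕ):ℝ)+2)/((((30:ℕ):ℝ)+2)-(22 : ℝ))) ≤
    ∑ j ∈ Finset.range (14+1), ∏ i ∈ Finset.range (j+1), ((30+1-i : ℕ) : ℝ) / (22 : ℝ) := by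
  norm_num [Finset.sum_range_succ, Finset.prod_range_succ]

set_option maxHeartbeats 4000000 in
lemma cert13 : 19 * ((((33:ℕ):ℝ)+2)/((((33:ℕ):ℝ)+2)-(49/2 : ℝ))) ≤
    ∑ j ∈ Finset.range (15+1), ∏ i ∈ Finset.range (j+1), ((33+1-i : ℕ) : ℝ) / (49/2 : ℝ) := by
  norm_num [Finset.sum_range_succ, Finset.prod_range_succ]

set_option maxHeartbeats 4000000 in
lemma cert14 : 19 * ((((36:ℕ):ℝ)+2)/((((36:ℕ):ℝ)+2)-(27 : ℝ))) ≤
    ∑ j ∈ Finset.range (15+1), ∏ i ∈ Finset.range (j+1), ((36+1-i : ℕ) : ℝ) / (27 : ℝ) := by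
  norm_num [Finset.sum_range_succ, Finset.prod_range_succ]

set_option maxHeartbeats 4000000 in
lemma cert15 : 19 * ((((40:ℕ):ℝ)+2)/((((40:ℕ):ℝ)+2)-(61/2 : ℝ))) ≤
    ∑ j ∈ Finset.range (17+1), ∏ i ∈ Finset.range (j+1), ((40+1-i : ℕ) : ℝ) / (61/2 : ℝ) := by
  norm_num [Finset.sum_range_succ, Finset.prod_range_succ]

set_option maxHeartbeats 4000000 in
lemma cert16 : 19 * ((((44:ℕ):ℝ)+2)/((((44:ℕ):ℝ)+2)-(34 : ℝ))) ≤
    ∑ j ∈ Finset.range (18+1), ∏ i ∈ Finset.range (j+1), ((44+1-i : ℕ) : ℝ) / (34 : ℝ) := by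
  norm_num [Finset.sum_range_succ, Finset.prod_range_succ]

set_option maxHeartbeats 4000000 in
lemma cert17 : 19 * ((((49:ℕ):ℝ)+2)/((((49:ℕ):ℝ)+2)-(153/4 : ℝ))) ≤
    ∑ j ∈ Finset.range (18+1), ∏ i ∈ Finset.range (j+1), ((49+1-i : ℕ) : ℝ) / (153/4 : ℝ) := by
  norm_num [Finset.sum_range_succ, Finset.prod_range_succ]

set_option maxHeartbeats 4000000 in
lemma cert18 : 19 * ((((54:ℕ):ℝ)+2)/((((54:ℕ):ℝ)+2)-(171/4 : ℝ))) ≤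
    ∑ j ∈ Finset.range (21+1), ∏ i ∈ Finset.range (j+1), ((54+1-i : ℕ) : ℝ) / (171/4 : ℝ) := by
  norm_num [Finset.sum_range_succ, Finset.prod_range_succ]

set_option maxHeartbeats 4000000 in
lemma cert19 : 19 * ((((60:ℕ):ℝ)+2)/((((60:ℕ):ℝ)+2)-(48 : ℝ))) ≤
    ∑ j ∈ Finset.range (21+1), ∏ i ∈ Finset.range (j+1), ((60+1-i : ℕ) : ℝ) / (48 : ℝ) := by
  norm_num [Finset.sum_range_succ, Finset.prod_range_succ]

set_option maxHeartbeats 4000000 in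
lemma cert20 : 19 * ((((67:ℕ):ℝ)+2)/((((67:ℕ):ℝ)+2)-(217/4 : ℝ))) ≤
    ∑ j ∈ Finset.range (23+1), ∏ i ∈ Finset.range (j+1), ((67+1-i : ℕ) : ℝ) / (217/4 : ℝ) := by
  norm_num [Finset.sum_range_succ, Finset.prod_range_succ]

set_option maxHeartbeats 4000000 in
lemma cert21 : 19 * ((((75:ℕ):ℝ)+2)/((((75:ℕ):ℝ)+2)-(123/2 : ℝ))) ≤
    ∑ j ∈ Finset.range (26+1), ∏ i ∈ Finset.range (j+1), ((75+1-i : ℕ) : ℝ) / (123/2 : ℝ) := by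
  norm_num [Finset.sum_range_succ, Finset.prod_range_succ]

set_option maxHeartbeats 4000000 in
lemma cert22 : 19 * ((((84:ℕ):ℝ)+2)/((((84:ℕ):ℝ)+2)-(139/2 : ℝ))) ≤
    ∑ j ∈ Finset.range (26+1), ∏ i ∈ Finset.range (j+1), ((84+1-i : ℕ) : ℝ) / (139/2 : ℝ) := by
  norm_num [Finset.sum_range_succ, Finset.prod_range_succ]

set_option maxHeartbeats 4000000 in
lemma cert23 : 19 * ((((95:ℕ):ℝ)+2)/((((95:ℕ):ℝ)+2)-(159/2 : ℝ))) ≤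
    ∑ j ∈ Finset.range (28+1), ∏ i ∈ Finset.range (j+1), ((95+1-i : ℕ) : ℝ) / (159/2 : ℝ) := by
  norm_num [Finset.sum_range_succ, Finset.prod_range_succ]

set_option maxHeartbeats 4000000 in
lemma cert24 : 19 * ((((108:ℕ):ℝ)+2)/((((108:ℕ):ℝ)+2)-(183/2 : ℝ))) ≤
    ∑ j ∈ Finset.range (33+1), ∏ i ∈ Finset.range (j+1), ((108+1-i : ℕ) : ℝ) / (183/2 : ℝ) := by
  norm_num [Finset.sum_range_succ, Finset.prod_range_succ]

set_option maxHeartbeats 4000000 in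
lemma cert25 : 19 * ((((123:ℕ):ℝ)+2)/((((123:ℕ):ℝ)+2)-(421/4 : ℝ))) ≤
    ∑ j ∈ Finset.range (35+1), ∏ i ∈ Finset.range (j+1), ((123+1-i : ℕ) : ℝ) / (421/4 : ℝ) := by
  norm_num [Finset.sum_range_succ, Finset.prod_range_succ]

set_option maxHeartbeats 4000000 in
lemma cert26 : 19 * ((((141:ℕ):ℝ)+2)/((((141:ℕ):ℝ)+2)-(487/4 : ℝ))) ≤
    ∑ j ∈ Finset.range (35+1), ∏ i ∈ Finset.range (j+1), ((141+1-i : ℕ) : ℝ) / (487/4 : ℝ) := by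
  norm_num [Finset.sum_range_succ, Finset.prod_range_succ]

set_option maxHeartbeats 4000000 in
lemma cert27 : 19 * ((((163:ℕ):ℝ)+2)/((((163:ℕ):ℝ)+2)-(569/4 : ℝ))) ≤
    ∑ j ∈ Finset.range (40+1), ∏ i ∈ Finset.range (j+1), ((163+1-i : ℕ) : ℝ) / (569/4 : ℝ) := by
  norm_num [Finset.sum_range_succ, Finset.prod_range_succ]

set_option maxHeartbeats 4000000 in
lemma cert28 : 19 * ((((189:ℕ):ℝ)+2)/((((189:ℕ):ℝ)+2)-(333/2 : ℝ))) ≤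
    ∑ j ∈ Finset.range (43+1), ∏ i ∈ Finset.range (j+1), ((189+1-i : ℕ) : ℝ) / (333/2 : ℝ) := by
  norm_num [Finset.sum_range_succ, Finset.prod_range_succ]

set_option maxHeartbeats 4000000 in
lemma cert29 : 19 * ((((221:ℕ):ℝ)+2)/((((221:ℕ):ℝ)+2)-(393/2 : ℝ))) ≤
    ∑ j ∈ Finset.range (46+1), ∏ i ∈ Finset.range (j+1), ((221+1-i : ℕ) : ℝ) / (393/2 : ℝ) := by
  norm_num [Finset.sum_range_succ, Finset.prod_range_succ]

set_option maxHeartbeats 4000000 in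
lemma cert30 : 19 * ((((260:ℕ):ℝ)+2)/((((260:ℕ):ℝ)+2)-(225 : ℝ))) ≤
    ∑ j ∈ Finset.range (24+1), ∏ i ∈ Finset.range (j+1), ((260+1-i : ℕ) : ℝ) / (225 : ℝ) := by
  norm_num [Finset.sum_range_succ, Finset.prod_range_succ]

lemma upper_small (lam : ℝ) (h0 : 0 < lam) (hle : lam ≤ 225) :
    ∃ m : ℕ, (m:ℝ) ≤ 1.3*lam + 5 ∧ (0.95:ℝ) ≤ poissonCDF lam m := by
  rcases le_or_gt lam (5/2 : ℝ) with h1 | h1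
  · exact ⟨5, by push_cast; linarith, interval_lemma (5/2 : ℝ) 5 4 (by norm_num) (by norm_num) cert1 lam h0 h1⟩
  rcases le_or_gt lam (9/2 : ℝ) with h2 | h2
  · exact ⟨8, by push_cast; linarith, interval_lemma (9/2 : ℝ) 8 6 (by norm_num) (by norm_num) cert2 lam h0 h2⟩
  rcases le_or_gt lam (6 : ℝ) with h3 | h3
  · exact ⟨10, by push_cast; linarith, interval_lemma (6 : ℝ) 10 7 (by norm_num) (by norm_num) cert3 lam h0 h3⟩
  rcases le_or_gt lam (15/2 : ℝ) with h4 | h4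
  · exact ⟨12, by push_cast; linarith, interval_lemma (15/2 : ℝ) 12 8 (by norm_num) (by norm_num) cert4 lam h0 h4⟩
  rcases le_or_gt lam (9 : ℝ) with h5 | h5
  · exact ⟨14, by push_cast; linarith, interval_lemma (9 : ℝ) 14 9 (by norm_num) (by norm_num) cert5 lam h0 h5⟩
  rcases le_or_gt lam (21/2 : ℝ) with h6 | h6
  · exact ⟨16, by push_cast; linarith, interval_lemma (21/2 : ℝ) 16 9 (by norm_num) (by norm_num) cert6 lam h0 h6⟩
  rcases le_or_gt lam (12 : ℝ) with h7 | h7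
  · exact ⟨18, by push_cast; linarith, interval_lemma (12 : ℝ) 18 9 (by norm_num) (by norm_num) cert7 lam h0 h7⟩
  rcases le_or_gt lam (55/4 : ℝ) with h8 | h8
  · exact ⟨20, by push_cast; linarith, interval_lemma (55/4 : ℝ) 20 11 (by norm_num) (by norm_num) cert8 lam h0 h8⟩
  rcases le_or_gt lam (61/4 : ℝ) with h9 | h9
  · exact ⟨22, by push_cast; linarith, interval_lemma (61/4 : ℝ) 22 11 (by norm_num) (by norm_num) cert9 lam h0 h9⟩
  rcases le_or_gt lam (17 : ℝ) with h10 | h10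
  · exact ⟨24, by push_cast; linarith, interval_lemma (17 : ℝ) 24 12 (by norm_num) (by norm_num) cert10 lam h0 h10⟩
  rcases le_or_gt lam (39/2 : ℝ) with h11 | h11
  · exact ⟨27, by push_cast; linarith, interval_lemma (39/2 : ℝ) 27 14 (by norm_num) (by norm_num) cert11 lam h0 h11⟩
  rcases le_or_gt lam (22 : ℝ) with h12 | h12
  · exact ⟨30, by push_cast; linarith, interval_lemma (22 : ℝ) 30 14 (by norm_num) (by norm_num) cert12 lam h0 h12⟩
  rcases le_or_gt lam (49/2 : ℝ) with h13 | h13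
  · exact ⟨33, by push_cast; linarith, interval_lemma (49/2 : ℝ) 33 15 (by norm_num) (by norm_num) cert13 lam h0 h13⟩
  rcases le_or_gt lam (27 : ℝ) with h14 | h14
  · exact ⟨36, by push_cast; linarith, interval_lemma (27 : ℝ) 36 15 (by norm_num) (by norm_num) cert14 lam h0 h14⟩
  rcases le_or_gt lam (61/2 : ℝ) with h15 | h15
  · exact ⟨40, by push_cast; linarith, interval_lemma (61/2 : ℝ) 40 17 (by norm_num) (by norm_num) cert15 lam h0 h15⟩
  rcases le_or_gt lam (34 : ℝ) with h16 | h16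
  · exact ⟨44, by push_cast; linarith, interval_lemma (34 : ℝ) 44 18 (by norm_num) (by norm_num) cert16 lam h0 h16⟩
  rcases le_or_gt lam (153/4 : ℝ) with h17 | h17
  · exact ⟨49, by push_cast; linarith, interval_lemma (153/4 : ℝ) 49 18 (by norm_num) (by norm_num) cert17 lam h0 h17⟩
  rcases le_or_gt lam (171/4 : ℝ) with h18 | h18
  · exact ⟨54, by push_cast; linarith, interval_lemma (171/4 : ℝ) 54 21 (by norm_num) (by norm_num) cert18 lam h0 h18⟩
  rcases le_or_gt lam (48 : ℝ) with h19 | h19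
  · exact ⟨60, by push_cast; linarith, interval_lemma (48 : ℝ) 60 21 (by norm_num) (by norm_num) cert19 lam h0 h19⟩
  rcases le_or_gt lam (217/4 : ℝ) with h20 | h20
  · exact ⟨67, by push_cast; linarith, interval_lemma (217/4 : ℝ) 67 23 (by norm_num) (by norm_num) cert20 lam h0 h20⟩
  rcases le_or_gt lam (123/2 : ℝ) with h21 | h21
  · exact ⟨75, by push_cast; linarith, interval_lemma (123/2 : ℝ) 75 26 (by norm_num) (by norm_num) cert21 lam h0 h21⟩
  rcases le_or_gt lam (139/2 : ℝ) with h22 | h22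
  · exact ⟨84, by push_cast; linarith, interval_lemma (139/2 : ℝ) 84 26 (by norm_num) (by norm_num) cert22 lam h0 h22⟩
  rcases le_or_gt lam (159/2 : ℝ) with h23 | h23
  · exact ⟨95, by push_cast; linarith, interval_lemma (159/2 : ℝ) 95 28 (by norm_num) (by norm_num) cert23 lam h0 h23⟩
  rcases le_or_gt lam (183/2 : ℝ) with h24 | h24
  · exact ⟨108, by push_cast; linarith, interval_lemma (183/2 : ℝ) 108 33 (by norm_num) (by norm_num) cert24 lam h0 h24⟩
  rcases le_or_gt lam (421/4 : ℝ) with h25 | h25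
  · exact ⟨123, by push_cast; linarith, interval_lemma (421/4 : ℝ) 123 35 (by norm_num) (by norm_num) cert25 lam h0 h25⟩
  rcases le_or_gt lam (487/4 : ℝ) with h26 | h26
  · exact ⟨141, by push_cast; linarith, interval_lemma (487/4 : ℝ) 141 35 (by norm_num) (by norm_num) cert26 lam h0 h26⟩
  rcases le_or_gt lam (569/4 : ℝ) with h27 | h27
  · exact ⟨163, by push_cast; linarith, interval_lemma (569/4 : ℝ) 163 40 (by norm_num) (by norm_num) cert27 lam h0 h27⟩
  rcases le_or_gt lam (333/2 : ℝ) with h28 | h28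
  · exact ⟨189, by push_cast; linarith, interval_lemma (333/2 : ℝ) 189 43 (by norm_num) (by norm_num) cert28 lam h0 h28⟩
  rcases le_or_gt lam (393/2 : ℝ) with h29 | h29
  · exact ⟨221, by push_cast; linarith, interval_lemma (393/2 : ℝ) 221 46 (by norm_num) (by norm_num) cert29 lam h0 h29⟩
  exact ⟨260, by push_cast; linarith, interval_lemma (225 : ℝ) 260 24 (by norm_num) (by norm_num) cert30 lam h0 hle⟩
/-- Bounds on the maximal support point of the truncated Poisson `q^{0.95}(λ)`:
`λ - ln 2 ≤ m(q^{0.95}(λ)) ≤ 1.3 λ + 5` for all `λ > 0`. -/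
theorem truncated_poisson_support_bounds (lam : ℝ) (hlam : 0 < lam) :
    lam - Real.log 2
      ≤ ((sSup {k : ℕ | poissonPMF lam k > 0 ∧
            k ≤ sInf {m : ℕ | (0.95 : ℝ) ≤ poissonCDF lam m}} : ℕ) : ℝ)
    ∧ ((sSup {k : ℕ | poissonPMF lam k > 0 ∧
            k ≤ sInf {m : ℕ | (0.95 : ℝ) ≤ poissonCDF lam m}} : ℕ) : ℝ)
        ≤ 1.3 * lam + 5 := by
  obtain ⟨m₀, hm₀le, hm₀⟩ : ∃ m₀ : ℕ, (m₀:ℝ) ≤ 1.3*lam + 5 ∧ (0.95:ℝ) ≤ poissonCDF lam m₀ := by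
    rcases le_or_gt lam 225 with h | h
    · exact upper_small lam hlam h
    · exact upper_large lam h.le
  have hne : {m : ℕ | (0.95 : ℝ) ≤ poissonCDF lam m}.Nonempty := ⟨m₀, hm₀⟩
  set M := sInf {m : ℕ | (0.95 : ℝ) ≤ poissonCDF lam m} with hM
  have hMS : (0.95 : ℝ) ≤ poissonCDF lam M := Nat.sInf_mem hne
  have hMle : M ≤ m₀ := Nat.sInf_le hm₀
  have hset : {k : ℕ | poissonPMF lam k > 0 ∧ k ≤ M} = Set.Iic M := by
    ext k
    simp only [Set.mem_setOf_eq, Set.mem_Iic]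
    constructor
    · rintro ⟨_, h⟩; exact h
    · intro h
      refine ⟨?_, h⟩
      unfold poissonPMF
      exact div_pos (mul_pos (Real.exp_pos _) (pow_pos hlam k))
        (by exact_mod_cast Nat.factorial_pos k)
  rw [hset, csSup_Iic]
  constructor
  · by_contra hcon
    push_neg at hcon
    have hlt : poissonCDF lam M < 0.95 := lower_aux lam M hlam (by linarith)
    linarith
  · calc ((M : ℕ):ℝ) ≤ (m₀:ℝ) := by exact_mod_cast hMle
      _ ≤ 1.3*lam + 5 := hm₀le
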